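/- For the TDMA secrecy sum-rate maximization, the choice α_k* = P_k / Σ_{j=1}^K P_j simultaneously maximizes both Σ_k (α_k/2)·log((α_k+P_k)/(α_k+h·P_k)) and Σ_k (α_k/2)·log(1+P_k/α_k) over time-sharing vectors α with α_k ≥ 0 and Σ_k α_k = 1, yielding the maxima (1/2)·log((1+P_K)/(1+h·P_K)) and (1/2)·log(1+P_K) respectively, where P_K = Σ_k P_k. -/

import Mathlib

open Real Finset

lemma phi_hasDerivAt (h : ℝ) (hh0 : 0 < h) {x : ℝ} (hx : 0 ≤ x) :
    HasDerivAt (fun x => Real.log (1+x) - Real.log (1+h*x))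
      (1/(1+x) - h/(1+h*x)) x := by
  have h1 : (1:ℝ) + x > 0 := by linarith
  have h2 : (1:ℝ) + h*x > 0 := by nlinarith
  have d1 : HasDerivAt (fun x : ℝ => Real.log (1+x)) (1/(1+x)) x := by
    simpa using ((hasDerivAt_id x).const_add 1).log (ne_of_gt h1)
  have d2 : HasDerivAt (fun x : ℝ => Real.log (1+h*x)) (h/(1+h*x)) x := by
    simpa using (((hasDerivAt_id x).const_mul h).const_add 1).log (ne_of_gt h2)
  exact d1.sub d2

lemma phi_concave (h : ℝ) (hh0 : 0 < h) (hh1 : h < 1) :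
    ConcaveOn ℝ (Set.Ici 0) (fun x => Real.log (1+x) - Real.log (1+h*x)) := by
  have hint : interior (Set.Ici (0:ℝ)) = Set.Ioi 0 := interior_Ici
  have hderiv : ∀ x ∈ Set.Ioi (0:ℝ),
      deriv (fun x => Real.log (1+x) - Real.log (1+h*x)) x = 1/(1+x) - h/(1+h*x) :=
    fun x hx => (phi_hasDerivAt h hh0 (le_of_lt hx)).deriv
  apply AntitoneOn.concaveOn_of_deriv (convex_Ici 0)
  · exact fun x hx => (phi_hasDerivAt h hh0 hx).continuousAt.continuousWithinAt
  · rw [hint]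
    exact fun x hx => (phi_hasDerivAt h hh0 (le_of_lt hx)).differentiableAt.differentiableWithinAt
  · rw [hint]
    intro x hx y hy hxy
    rw [hderiv x hx, hderiv y hy]
    have e : ∀ z : ℝ, 0 < z → 1/(1+z) - h/(1+h*z) = (1-h)/((1+z)*(1+h*z)) := by
      intro z hz
      have h1 : (1:ℝ) + z > 0 := by linarith
      have h2 : (1:ℝ) + h*z > 0 := by nlinarith
      field_simp
      all_goals ring
    rw [e x hx, e y hy]
    have h1x : (1:ℝ) + x > 0 := by linarith [(Set.mem_Ioi.mp hx).le]
    have h2x : (1:ℝ) + h*x > 0 := by nlinarith [(Set.mem_Ioi.mp hx).le]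
    have h1y : (1:ℝ) + y > 0 := by linarith [(Set.mem_Ioi.mp hy).le]
    have h2y : (1:ℝ) + h*y > 0 := by nlinarith [(Set.mem_Ioi.mp hy).le]
    apply div_le_div_of_nonneg_left (by linarith) (by positivity)
    nlinarith [mul_le_mul_of_nonneg_left (mul_self_le_mul_self (Set.mem_Ioi.mp hx).le hxy) hh0.le, (Set.mem_Ioi.mp hx).le]

theorem tdma_optimal_time_sharing
    (K : ℕ) (hK : 0 < K) (P : Fin K → ℝ) (hP : ∀ k, 0 < P k)
    (h : ℝ) (hh0 : 0 < h) (hh1 : h < 1) :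
    let PK : ℝ := ∑ k, P k
    let f : (Fin K → ℝ) → ℝ := fun α =>
      ∑ k, (α k / 2) * logb 2 ((α k + P k) / (α k + h * P k))
    let g : (Fin K → ℝ) → ℝ := fun α =>
      ∑ k, (α k / 2) * logb 2 (1 + P k / α k)
    let αstar : Fin K → ℝ := fun k => P k / PK
    (∀ α : Fin K → ℝ, (∀ k, 0 < α k) → (∑ k, α k) = 1 → f α ≤ f αstar) ∧
    (∀ α : Fin K → ℝ, (∀ k, 0 < α k) → (∑ k, α k) = 1 → g α ≤ g αstar) ∧
    f αstar = (1 / 2) * logb 2 ((1 + PK) / (1 + h * PK)) ∧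
    g αstar = (1 / 2) * logb 2 (1 + PK) := by
  intro PK f g αstar
  have : Nonempty (Fin K) := ⟨⟨0, hK⟩⟩
  have hPK : 0 < PK := Finset.sum_pos (fun k _ => hP k) univ_nonempty
  have hPKne : PK ≠ 0 := ne_of_gt hPK
  have h1PK : (0:ℝ) < 1 + PK := by linarith
  have h2PK : (0:ℝ) < 1 + h * PK := by nlinarith
  have hlog2 : (0:ℝ) < Real.log 2 := Real.log_pos one_lt_two
  set φ : ℝ → ℝ := fun x => Real.log (1+x) - Real.log (1+h*x) with hφ
  -- value of f at αstar
  have hfstar : f αstar = (1 / 2) * logb 2 ((1 + PK) / (1 + h * PK)) := by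
    have key : ∀ k, (αstar k + P k) / (αstar k + h * P k) = (1 + PK) / (1 + h * PK) := by
      intro k
      have hk := hP k
      show (P k / PK + P k) / (P k / PK + h * P k) = _
      rw [div_eq_div_iff]
      · field_simp
        all_goals ring
      · have : 0 < P k / PK + h * P k := by positivity
        linarith
      · linarith
    show (∑ k, (αstar k / 2) * logb 2 ((αstar k + P k) / (αstar k + h * P k))) = _
    calc (∑ k, (αstar k / 2) * logb 2 ((αstar k + P k) / (αstar k + h * P k)))
        = ∑ k, (αstar k / 2) * logb 2 ((1 + PK) / (1 + h * PK)) := by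
          exact Finset.sum_congr rfl fun k _ => by rw [key k]
      _ = (∑ k, αstar k) / 2 * logb 2 ((1 + PK) / (1 + h * PK)) := by
          rw [← Finset.sum_mul, ← Finset.sum_div]
      _ = (1 / 2) * logb 2 ((1 + PK) / (1 + h * PK)) := by
          have : (∑ k, αstar k) = 1 := by
            show (∑ k, P k / PK) = 1
            rw [← Finset.sum_div]
            exact div_self hPKne
          rw [this]
  -- value of g at αstar
  have hgstar : g αstar = (1 / 2) * logb 2 (1 + PK) := by
    have key : ∀ k, 1 + P k / αstar k = 1 + PK := by
      intro k
      have hk := (hP k).ne'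
      show 1 + P k / (P k / PK) = 1 + PK
      rw [div_div_eq_mul_div, mul_div_assoc, mul_comm, div_mul_cancel₀ _ hk]
    show (∑ k, (αstar k / 2) * logb 2 (1 + P k / αstar k)) = _
    calc (∑ k, (αstar k / 2) * logb 2 (1 + P k / αstar k))
        = ∑ k, (αstar k / 2) * logb 2 (1 + PK) := by
          exact Finset.sum_congr rfl fun k _ => by rw [key k]
      _ = (∑ k, αstar k) / 2 * logb 2 (1 + PK) := by
          rw [← Finset.sum_mul, ← Finset.sum_div]
      _ = (1 / 2) * logb 2 (1 + PK) := by
          have : (∑ k, αstar k) = 1 := by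
            show (∑ k, P k / PK) = 1
            rw [← Finset.sum_div]
            exact div_self hPKne
          rw [this]
  refine ⟨?_, ?_, hfstar, hgstar⟩
  · -- maximality of f
    intro α hα hsum
    have hxpos : ∀ k, 0 < P k / α k := fun k => div_pos (hP k) (hα k)
    have jensen := (phi_concave h hh0 hh1).le_map_sum (t := univ) (w := α)
      (p := fun k => P k / α k) (fun i _ => (hα i).le) hsum
      (fun i _ => (hxpos i).le)
    have hsum2 : (∑ i, α i • (P i / α i)) = PK := by
      apply Finset.sum_congr rfl
      intro i _
      rw [smul_eq_mul, mul_comm, div_mul_cancel₀ _ (ne_of_gt (hα i))]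
    rw [hsum2] at jensen
    have hterm : ∀ k, logb 2 ((α k + P k) / (α k + h * P k)) = φ (P k / α k) / Real.log 2 := by
      intro k
      have hak := hα k
      have hpk := hP k
      have e1 : (α k + P k) / (α k + h * P k) = (1 + P k / α k) / (1 + h * (P k / α k)) := by
        rw [div_eq_div_iff]
        · field_simp
          all_goals ring
        · nlinarith
        · have := hxpos k; nlinarith
      rw [e1, Real.logb, Real.log_div (by positivity) (by have := hxpos k; positivity)]
    have hfα : f α = (∑ k, α k * φ (P k / α k)) / (2 * Real.log 2) := by
      show (∑ k, (α k / 2) * logb 2 ((α k + P k) / (α k + h * P k))) = _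
      rw [Finset.sum_div]
      apply Finset.sum_congr rfl
      intro k _
      rw [hterm k]
      field_simp
      all_goals ring
    have hfstar' : f αstar = φ PK / (2 * Real.log 2) := by
      rw [hfstar, Real.logb, Real.log_div (ne_of_gt h1PK) (ne_of_gt h2PK)]
      simp only [hφ]
      field_simp
      all_goals ring
    rw [hfα, hfstar']
    apply div_le_div_of_nonneg_right _ (by positivity)
    calc (∑ k, α k * φ (P k / α k)) = ∑ k, α k • φ (P k / α k) := by simp
      _ ≤ φ PK := jensen
  · -- maximality of g
    intro α hα hsum
    have hxpos : ∀ k, 0 < P k / α k := fun k => div_pos (hP k) (hα k)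
    have jensen := strictConcaveOn_log_Ioi.concaveOn.le_map_sum (t := univ) (w := α)
      (p := fun k => 1 + P k / α k) (fun i _ => (hα i).le) hsum
      (fun i _ => by have := hxpos i; exact Set.mem_Ioi.mpr (by linarith))
    have hsum2 : (∑ i, α i • (1 + P i / α i)) = 1 + PK := by
      have : ∀ i ∈ univ, α i • (1 + P i / α i) = α i + P i := by
        intro i _
        rw [smul_eq_mul, mul_add, mul_one, mul_comm, div_mul_cancel₀ _ (ne_of_gt (hα i))]
      rw [Finset.sum_congr rfl this, Finset.sum_add_distrib, hsum]
    rw [hsum2] at jensen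
    have hgα : g α = (∑ k, α k * Real.log (1 + P k / α k)) / (2 * Real.log 2) := by
      show (∑ k, (α k / 2) * logb 2 (1 + P k / α k)) = _
      rw [Finset.sum_div]
      apply Finset.sum_congr rfl
      intro k _
      rw [Real.logb]
      field_simp
      all_goals ring
    have hgstar' : g αstar = Real.log (1 + PK) / (2 * Real.log 2) := by
      rw [hgstar, Real.logb]
      field_simp
      all_goals ring
    rw [hgα, hgstar']
    apply div_le_div_of_nonneg_right _ (by positivity)
    calc (∑ k, α k * Real.log (1 + P k / α k)) = ∑ k, α k • Real.log (1 + P k / α k) := by simp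
      _ ≤ Real.log (1 + PK) := jensen
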